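/- For any k ≥ 1, the map sending a rook placement R on the k-tuple staircase kδ_n to the labeled tree with root 1 and, for 1 ≤ j ≤ k, vertex v+1 as the j-th child of vertex u whenever the j-th column of the u-th block of R has a rook in row v, is a bijection between rook placements on kδ_n (one rook per row, at most one per column) and increasing k-ary trees on n+1 vertices; in particular the number of such rook placements is the number of increasing k-ary trees on n+1 vertices. -/

import Mathlib

/-- Rook placements on the `k`-tuple staircase `kδ_n` (the Young diagram
`(kn, k(n-1), …, k)` in French notation): one rook per row (row `i`, numbered
from the top starting at `0`, has `k*(i+1)` cells), at most one rook per
column.  Block `u` (0-indexed) consists of the columns `ku, …, ku+k-1`. -/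
def RookPlacementK (k n : ℕ) :=
  {r : Fin n → Fin (k * n) //
    Function.Injective r ∧ ∀ i : Fin n, (r i : ℕ) < k * (i.val + 1)}

/-- Increasing `k`-ary trees on `n+1` vertices `0, …, n` (vertex `i` carries
label `i+1`): each vertex has, for each `j : Fin k`, at most one `j`-th child,
children have larger labels than their parent, and every non-root vertex has a
unique parent. -/
def IncKTree (k n : ℕ) :=
  {c : Fin (n + 1) → Fin k → Option (Fin (n + 1)) //
    (∀ u j v, c u j = some v → u < v) ∧
    (∀ v : Fin (n + 1), v ≠ 0 → ∃! p : Fin (n + 1) × Fin k, c p.1 p.2 = some v)}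

section Aux
variable {k n : ℕ}

lemma kdm_div (hk : 0 < k) (a : ℕ) (c : Fin k) : (k * a + c.val) / k = a := by
  rw [Nat.mul_add_div hk, Nat.div_eq_of_lt c.isLt, add_zero]

lemma kdm_mod (a : ℕ) (c : Fin k) : (k * a + c.val) % k = c.val := by
  rw [Nat.mul_add_mod, Nat.mod_eq_of_lt c.isLt]

lemma kdm_unique (hk : 0 < k) {a b : ℕ} {c d : Fin k}
    (h : k * a + c.val = k * b + d.val) : a = b ∧ c = d := by
  have h1 : a = b := by
    have := kdm_div hk a c
    rw [h, kdm_div hk b d] at this; omega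
  have h2 : c.val = d.val := by
    have := kdm_mod a c
    rw [h, kdm_mod b d] at this; omega
  exact ⟨h1, Fin.ext h2⟩

/-- The child function associated to a rook placement. -/
noncomputable def fwdC (k n : ℕ) (r : Fin n → Fin (k * n)) :
    Fin (n + 1) → Fin k → Option (Fin (n + 1)) := fun u j =>
  if h : ∃ i : Fin n, (r i : ℕ) = k * u.val + j.val then
    some ⟨h.choose.val + 1, Nat.succ_lt_succ h.choose.isLt⟩
  else none

lemma fwdC_spec {r : Fin n → Fin (k * n)} (hr : Function.Injective r)
    (u : Fin (n + 1)) (j : Fin k) (v : Fin (n + 1)) :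
    fwdC k n r u j = some v ↔
      ∃ i : Fin n, (r i : ℕ) = k * u.val + j.val ∧ v.val = i.val + 1 := by
  unfold fwdC
  split_ifs with h
  · constructor
    · intro hv
      refine ⟨h.choose, h.choose_spec, ?_⟩
      have := Option.some_injective _ hv
      rw [← this]
    · rintro ⟨i, hi, hv⟩
      have hci : h.choose = i := hr (Fin.ext (by rw [h.choose_spec, hi]))
      exact congrArg some (Fin.ext (by simp [hv, hci]))
  · constructor
    · intro hv; exact absurd hv (by simp)
    · rintro ⟨i, hi, _⟩; exact absurd ⟨i, hi⟩ h

/-- Forward map: rook placements to increasing k-ary trees. -/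
noncomputable def fwd (hk : 1 ≤ k) (R : RookPlacementK k n) : IncKTree k n := by
  refine ⟨fwdC k n R.1, ?_, ?_⟩
  · intro u j v h
    rw [fwdC_spec R.2.1] at h
    obtain ⟨i, hi, hv⟩ := h
    have hrow := R.2.2 i
    rw [hi] at hrow
    have : k * u.val < k * (i.val + 1) :=
      lt_of_le_of_lt (Nat.le_add_right _ _) hrow
    have := Nat.lt_of_mul_lt_mul_left this
    exact Fin.lt_def.2 (by omega)
  · intro v hv
    have hv0 : 0 < v.val := by
      rcases Nat.eq_zero_or_pos v.val with h | h
      · exact absurd (Fin.ext (by simp [h])) hv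
      · exact h
    have hvn : v.val - 1 < n := by have := v.isLt; omega
    set i : Fin n := ⟨v.val - 1, hvn⟩ with hidef
    have hvi : v.val = i.val + 1 := by simp [hidef]; omega
    set m : ℕ := (R.1 i : ℕ) with hm
    have hrow : m < k * (i.val + 1) := R.2.2 i
    have hdiv : m / k < i.val + 1 := Nat.div_lt_of_lt_mul hrow
    refine ⟨(⟨m / k, by have := i.isLt; omega⟩, ⟨m % k, Nat.mod_lt _ hk⟩), ?_, ?_⟩
    · show fwdC k n R.1 _ _ = some v
      rw [fwdC_spec R.2.1]
      exact ⟨i, by simp [Nat.div_add_mod]; rfl, hvi⟩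
    · rintro ⟨p, q⟩ hpq
      simp only at hpq
      rw [fwdC_spec R.2.1] at hpq
      obtain ⟨i', hi', hv'⟩ := hpq
      have : i' = i := Fin.ext (by omega)
      subst this
      have hmeq : m = k * p.val + q.val := hi'
      have h1 : p.val = m / k := by rw [hmeq, kdm_div hk]
      have h2 : q.val = m % k := by rw [hmeq, kdm_mod]
      exact Prod.ext (Fin.ext (by simp [h1])) (Fin.ext (by simp [h2]))

lemma succ_ne_zero' (i : Fin n) :
    (⟨i.val + 1, Nat.succ_lt_succ i.isLt⟩ : Fin (n + 1)) ≠ 0 := by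
  intro h; exact absurd (congrArg Fin.val h) (by simp)

/-- The parent of vertex `i+1` in an increasing k-ary tree. -/
noncomputable def parentOf (T : IncKTree k n) (i : Fin n) : Fin (n + 1) × Fin k :=
  (T.2.2 ⟨i.val + 1, Nat.succ_lt_succ i.isLt⟩ (succ_ne_zero' i)).choose

lemma parentOf_spec (T : IncKTree k n) (i : Fin n) :
    T.1 (parentOf T i).1 (parentOf T i).2 = some ⟨i.val + 1, Nat.succ_lt_succ i.isLt⟩ :=
  (T.2.2 _ (succ_ne_zero' i)).choose_spec.1

lemma parentOf_unique (T : IncKTree k n) (i : Fin n) (p : Fin (n + 1) × Fin k)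
    (hp : T.1 p.1 p.2 = some ⟨i.val + 1, Nat.succ_lt_succ i.isLt⟩) :
    p = parentOf T i :=
  (T.2.2 _ (succ_ne_zero' i)).choose_spec.2 p hp

lemma parentOf_le (T : IncKTree k n) (i : Fin n) : (parentOf T i).1.val ≤ i.val := by
  have := T.2.1 _ _ _ (parentOf_spec T i)
  have := Fin.lt_def.1 this
  simp at this; omega

/-- Backward map on functions. -/
noncomputable def bwdC (T : IncKTree k n) : Fin n → Fin (k * n) := fun i =>
  ⟨k * (parentOf T i).1.val + (parentOf T i).2.val, by
    have h1 := parentOf_le T i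
    have h2 := (parentOf T i).2.isLt
    have h3 := i.isLt
    calc k * (parentOf T i).1.val + (parentOf T i).2.val
        < k * ((parentOf T i).1.val + 1) := by rw [Nat.mul_succ]; omega
      _ ≤ k * n := Nat.mul_le_mul_left k (by omega)⟩

lemma bwdC_row (T : IncKTree k n) (i : Fin n) : (bwdC T i : ℕ) < k * (i.val + 1) := by
  have h1 := parentOf_le T i
  have h2 := (parentOf T i).2.isLt
  show k * (parentOf T i).1.val + (parentOf T i).2.val < k * (i.val + 1)
  calc k * (parentOf T i).1.val + (parentOf T i).2.val
      < k * ((parentOf T i).1.val + 1) := by rw [Nat.mul_succ]; omega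
    _ ≤ k * (i.val + 1) := Nat.mul_le_mul_left k (by omega)

lemma bwdC_spec (hk : 1 ≤ k) (T : IncKTree k n) (i : Fin n) (u : Fin (n + 1)) (j : Fin k) :
    (bwdC T i : ℕ) = k * u.val + j.val ↔
      T.1 u j = some ⟨i.val + 1, Nat.succ_lt_succ i.isLt⟩ := by
  constructor
  · intro h
    have h' : k * (parentOf T i).1.val + (parentOf T i).2.val = k * u.val + j.val := h
    obtain ⟨h1, h2⟩ := kdm_unique hk h'
    have hu : u = (parentOf T i).1 := Fin.ext h1.symm
    rw [hu, ← h2]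
    exact parentOf_spec T i
  · intro h
    have := parentOf_unique T i (u, j) h
    show k * (parentOf T i).1.val + (parentOf T i).2.val = k * u.val + j.val
    rw [← this]

lemma bwdC_inj (T : IncKTree k n) : Function.Injective (bwdC T) := by
  intro i i' h
  have h' : k * (parentOf T i).1.val + (parentOf T i).2.val
      = k * (parentOf T i').1.val + (parentOf T i').2.val := congrArg Fin.val h
  obtain ⟨h1, h2⟩ := kdm_unique (parentOf T i).2.pos h'
  have := parentOf_spec T i
  rw [show (parentOf T i).1 = (parentOf T i').1 from Fin.ext h1, h2, parentOf_spec T i'] at this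
  have := Option.some_injective _ this
  exact Fin.ext (by have h := congrArg Fin.val this; simp at h; omega)

/-- Backward map: increasing k-ary trees to rook placements. -/
noncomputable def bwd (T : IncKTree k n) : RookPlacementK k n :=
  ⟨bwdC T, bwdC_inj T, bwdC_row T⟩

lemma left_inv (hk : 1 ≤ k) (R : RookPlacementK k n) : bwd (fwd hk R) = R := by
  apply Subtype.ext
  funext i
  apply Fin.ext
  have hspec := parentOf_spec (fwd hk R) i
  have : (fwd hk R).1 = fwdC k n R.1 := rfl
  rw [this, fwdC_spec R.2.1] at hspec
  obtain ⟨i', hi', hv'⟩ := hspec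
  rw [show i' = i from Fin.ext (by simpa using hv'.symm)] at hi'
  show k * (parentOf (fwd hk R) i).1.val + (parentOf (fwd hk R) i).2.val = (R.1 i : ℕ)
  exact hi'.symm

lemma right_inv (hk : 1 ≤ k) (T : IncKTree k n) : fwd hk (bwd T) = T := by
  apply Subtype.ext
  funext u j
  have key : ∀ v : Fin (n + 1), (fwd hk (bwd T)).1 u j = some v ↔ T.1 u j = some v := by
    intro v
    have : (fwd hk (bwd T)).1 = fwdC k n (bwdC T) := rfl
    rw [this, fwdC_spec (bwdC_inj T)]
    constructor
    · rintro ⟨i, hi, hv⟩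
      rw [bwdC_spec hk] at hi
      have : v = ⟨i.val + 1, Nat.succ_lt_succ i.isLt⟩ := Fin.ext (by simpa using hv)
      rw [this]; exact hi
    · intro h
      have hlt := T.2.1 _ _ _ h
      have hv0 : 0 < v.val := lt_of_le_of_lt (Nat.zero_le _) (Fin.lt_def.1 hlt)
      have hvn : v.val - 1 < n := by have := v.isLt; omega
      refine ⟨⟨v.val - 1, hvn⟩, ?_, by simp; omega⟩
      rw [bwdC_spec hk]
      have : (⟨(v.val - 1) + 1, Nat.succ_lt_succ hvn⟩ : Fin (n + 1)) = v :=
        Fin.ext (by simp; omega)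
      rw [this]; exact h
  rcases h : T.1 u j with _ | v
  · rcases h' : (fwd hk (bwd T)).1 u j with _ | w
    · rfl
    · rw [(key w).1 h'] at h; exact absurd h (by simp)
  · exact (key v).2 h

end Aux

/-- For any `k ≥ 1`, the map sending a rook placement `R` on the `k`-tuple
staircase `kδ_n` to the labelled tree with root `1` and, for each `j < k`,
vertex `v+1` as the `j`-th child of vertex `u` whenever the `j`-th column of
block `u` of `R` has a rook in row `v`, is a bijection between rook placements
on `kδ_n` and increasing `k`-ary trees on `n+1` vertices; in particular the
two sets are equinumerous. -/
theorem rook_placements_k_staircase_equiv_k_ary_trees (k n : ℕ) (hk : 1 ≤ k) :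
    (∃ e : RookPlacementK k n ≃ IncKTree k n,
      ∀ (R : RookPlacementK k n) (u v : Fin (n + 1)) (j : Fin k),
        (e R).1 u j = some v ↔
          ∃ i : Fin n, (R.1 i : ℕ) = k * u.val + j.val ∧ v.val = i.val + 1) ∧
    Nat.card (RookPlacementK k n) = Nat.card (IncKTree k n) := by
  refine ⟨⟨⟨fwd hk, bwd, left_inv hk, right_inv hk⟩, ?_⟩,
    Nat.card_congr ⟨fwd hk, bwd, left_inv hk, right_inv hk⟩⟩
  intro R u v j
  exact fwdC_spec R.2.1 u j v
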